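/- Let Λ be a finitely generated ℤ-module with a group Γ acting on it by additive automorphisms, and let Λ^f be the finite-orbit submodule. Then Λ^f is the largest Γ-stable submodule of Λ on which the action factors through a finite group: the image of Γ in AddAut(Λ^f) (for the restricted action) is finite, and any Γ-stable submodule N of Λ such that the image of Γ in AddAut(N) is finite satisfies N ⊆ Λ^f. -/
import Mathlib

/-- The submodule of elements with finite `Γ`-orbit. -/
def finOrbitSubmodule (Γ Λ : Type*) [Group Γ] [AddCommGroup Λ]
    [DistribMulAction Γ Λ] : Submodule ℤ Λ where
  carrier := {l | (MulAction.orbit Γ l).Finite}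
  zero_mem' := by
    have h : MulAction.orbit Γ (0 : Λ) ⊆ {0} := by
      rintro _ ⟨γ, rfl⟩; simp
    exact (Set.finite_singleton 0).subset h
  add_mem' := by
    intro a b ha hb
    have h : MulAction.orbit Γ (a + b) ⊆
        (fun p : Λ × Λ => p.1 + p.2) '' (MulAction.orbit Γ a ×ˢ MulAction.orbit Γ b) := by
      rintro _ ⟨γ, rfl⟩
      exact ⟨(γ • a, γ • b), ⟨⟨γ, rfl⟩, ⟨γ, rfl⟩⟩, (smul_add γ a b).symm⟩
    exact (((ha.prod hb).image _)).subset h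
  smul_mem' := by
    intro n a ha
    have h : MulAction.orbit Γ (n • a) ⊆ (n • ·) '' MulAction.orbit Γ a := by
      rintro _ ⟨γ, rfl⟩
      exact ⟨γ • a, ⟨γ, rfl⟩,
        (map_zsmul (DistribMulAction.toAddMonoidHom Λ γ) n a).symm⟩
    exact ((ha.image _)).subset h

/-- For a finitely generated `ℤ`-module `Λ` with a group `Γ` acting by additive
automorphisms, the finite-orbit submodule `Λ^f` is the largest `Γ`-stable
submodule on which the action factors through a finite group: the image of `Γ`
acting on `Λ^f` (encoded as the set of restricted action maps) is finite, and
any `Γ`-stable submodule `N` on which the image of `Γ` is finite is contained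
in `Λ^f`. -/
theorem finite_orbit_submodule_is_largest_with_finite_action
    {Γ Λ : Type*} [Group Γ] [AddCommGroup Λ] [DistribMulAction Γ Λ]
    [Module.Finite ℤ Λ] :
    (Set.range (fun γ : Γ =>
      fun x : {l : Λ // (MulAction.orbit Γ l).Finite} => γ • (x : Λ))).Finite ∧
    (∀ N : Submodule ℤ Λ, (∀ γ : Γ, ∀ x ∈ N, γ • x ∈ N) →
      (Set.range (fun γ : Γ => fun x : N => γ • (x : Λ))).Finite →
      ∀ x ∈ N, (MulAction.orbit Γ x).Finite) := by
  constructor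
  · -- the image of Γ acting on Λ^f is finite
    obtain ⟨T, hT⟩ : (finOrbitSubmodule Γ Λ).FG :=
      IsNoetherian.noetherian _
    have hTmem : ∀ t ∈ T, (MulAction.orbit Γ t).Finite := by
      intro t ht
      have : t ∈ finOrbitSubmodule Γ Λ := hT ▸ Submodule.subset_span ht
      exact this
    set S := {l : Λ // (MulAction.orbit Γ l).Finite}
    set ψ : (S → Λ) → (↥T → Λ) := fun f t => f ⟨t.1, hTmem t.1 t.2⟩ with hψ
    have key : ∀ γ₁ γ₂ : Γ, (∀ t ∈ T, γ₁ • t = γ₂ • t) →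
        ∀ x ∈ Submodule.span ℤ (↑T : Set Λ), γ₁ • x = γ₂ • x := by
      intro γ₁ γ₂ h x hx
      induction hx using Submodule.span_induction with
      | mem y hy => exact h y hy
      | zero => simp
      | add y z _ _ hy hz => rw [smul_add, smul_add, hy, hz]
      | smul n y _ hy =>
          have h1 : γ₁ • (n • y) = n • (γ₁ • y) :=
            map_zsmul (DistribMulAction.toAddMonoidHom Λ γ₁) n y
          have h2 : γ₂ • (n • y) = n • (γ₂ • y) :=
            map_zsmul (DistribMulAction.toAddMonoidHom Λ γ₂) n y
          rw [h1, h2, hy]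
    apply Set.Finite.of_finite_image (f := ψ)
    · apply Set.Finite.subset
        (Set.Finite.pi (fun t : ↥T => hTmem t.1 t.2))
      rintro _ ⟨_, ⟨γ, rfl⟩, rfl⟩
      intro t _
      exact ⟨γ, rfl⟩
    · rintro _ ⟨γ₁, rfl⟩ _ ⟨γ₂, rfl⟩ hcong
      funext x
      have hx : (x : Λ) ∈ Submodule.span ℤ (↑T : Set Λ) := by
        rw [hT]; exact x.2
      exact key γ₁ γ₂ (fun t ht => congrFun hcong ⟨t, ht⟩) x hx
  · -- any Γ-stable submodule with finite image of Γ consists of finite orbits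
    intro N hN hfin x hx
    have h : MulAction.orbit Γ x ⊆
        (fun f : N → Λ => f ⟨x, hx⟩) ''
          (Set.range fun γ : Γ => fun y : N => γ • (y : Λ)) := by
      rintro _ ⟨γ, rfl⟩
      exact ⟨_, ⟨γ, rfl⟩, rfl⟩
    exact ((hfin.image _)).subset h
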